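/- arXiv:2507.14522 — 2 statements merged into one kernel-verified Lean document; each statement's English description precedes it below -/
import Mathlib

section
/- Let F, G : ℝ → ℝ be three times continuously differentiable. For x ≠ 0 and T > 0 define B(x,T) = x · T · ( F(1/x + 3 T^{−1/3}) + G(1/x − 3 T^{−1/3}) + 3 T^{−1/3} · ( G'(1/x − 3 T^{−1/3}) − F'(1/x + 3 T^{−1/3}) ) ). Then B satisfies the wave equation ∂²B/∂T²(x,T) = T^{−8/3} · x⁴ · ∂²B/∂x²(x,T) for all x ≠ 0 and all T > 0. -/
lemma diff3 {F : ℝ → ℝ} (hF : ContDiff ℝ 3 F) :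
    Differentiable ℝ F ∧ Differentiable ℝ (deriv F) ∧ Differentiable ℝ (deriv (deriv F)) := by
  have h1 : Differentiable ℝ F := hF.differentiable (by norm_num)
  have h2 : ContDiff ℝ 2 (deriv F) := (contDiff_succ_iff_deriv.mp (show ContDiff ℝ (2+1) F from hF)).2.2
  have h3 : ContDiff ℝ 1 (deriv (deriv F)) := (contDiff_succ_iff_deriv.mp (show ContDiff ℝ (1+1) (deriv F) from h2)).2.2
  exact ⟨h1, h2.differentiable (by norm_num), h3.differentiable (by norm_num)⟩
lemma hasDerivAt_p {t : ℝ} (ht : 0 < t) :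
    HasDerivAt (fun s : ℝ => s ^ (-(1:ℝ)/3)) (-(1/3) * (t ^ (-(1:ℝ)/3))^4) t := by
  have h := Real.hasDerivAt_rpow_const (p := -(1:ℝ)/3) (Or.inl ht.ne')
  convert h using 1
  have h4 : ((t ^ (-(1:ℝ)/3))^4 : ℝ) = t ^ ((-(1:ℝ)/3) * 4) := by
    rw [← Real.rpow_natCast (t ^ (-(1:ℝ)/3)) 4, ← Real.rpow_mul ht.le]; norm_num
  rw [h4, show (-(1:ℝ)/3 - 1) = (-(1:ℝ)/3) * 4 by norm_num]
  ring
lemma tp3 {t : ℝ} (ht : 0 < t) : t * (t ^ (-(1:ℝ)/3))^3 = 1 := by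
  rw [← Real.rpow_natCast (t ^ (-(1:ℝ)/3)) 3, ← Real.rpow_mul ht.le]
  norm_num
  rw [Real.rpow_neg_one, mul_inv_cancel₀ ht.ne']

lemma step_t2 (F G : ℝ → ℝ) (hF1 : Differentiable ℝ F) (hF2 : Differentiable ℝ (deriv F))
    (hF3 : Differentiable ℝ (deriv (deriv F)))
    (hG1 : Differentiable ℝ G) (hG2 : Differentiable ℝ (deriv G))
    (hG3 : Differentiable ℝ (deriv (deriv G)))
    (x : ℝ) {t : ℝ} (ht : 0 < t) :
    HasDerivAt (fun s : ℝ =>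
        x * (F (1/x + 3 * s ^ (-(1:ℝ)/3)) + G (1/x - 3 * s ^ (-(1:ℝ)/3))
          + 3 * s ^ (-(1:ℝ)/3) *
            (deriv G (1/x - 3 * s ^ (-(1:ℝ)/3)) - deriv F (1/x + 3 * s ^ (-(1:ℝ)/3))))
        + 3 * x * s * (s ^ (-(1:ℝ)/3))^5 *
            (deriv (deriv F) (1/x + 3 * s ^ (-(1:ℝ)/3))
              + deriv (deriv G) (1/x - 3 * s ^ (-(1:ℝ)/3))))
      (x * (t ^ (-(1:ℝ)/3))^5 *
          (deriv (deriv F) (1/x + 3 * t ^ (-(1:ℝ)/3))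
            + deriv (deriv G) (1/x - 3 * t ^ (-(1:ℝ)/3)))
        + 3 * x * (t ^ (-(1:ℝ)/3))^6 *
          (deriv (deriv (deriv G)) (1/x - 3 * t ^ (-(1:ℝ)/3))
            - deriv (deriv (deriv F)) (1/x + 3 * t ^ (-(1:ℝ)/3)))) t := by
  have hp := hasDerivAt_p ht
  have hpm : HasDerivAt (fun s : ℝ => 3 * s ^ (-(1:ℝ)/3))
      (3 * (-(1/3) * (t ^ (-(1:ℝ)/3))^4)) t := hp.const_mul 3
  have ha : HasDerivAt (fun s : ℝ => 1/x + 3 * s ^ (-(1:ℝ)/3))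
      (3 * (-(1/3) * (t ^ (-(1:ℝ)/3))^4)) t := hpm.const_add (1/x)
  have hb : HasDerivAt (fun s : ℝ => 1/x - 3 * s ^ (-(1:ℝ)/3))
      (-(3 * (-(1/3) * (t ^ (-(1:ℝ)/3))^4))) t := hpm.const_sub (1/x)
  have hFa : HasDerivAt (fun s : ℝ => F (1/x + 3 * s ^ (-(1:ℝ)/3)))
      (deriv F (1/x + 3 * t ^ (-(1:ℝ)/3)) * (3 * (-(1/3) * (t ^ (-(1:ℝ)/3))^4))) t :=
    (hF1 _).hasDerivAt.comp t ha
  have hGb : HasDerivAt (fun s : ℝ => G (1/x - 3 * s ^ (-(1:ℝ)/3)))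
      (deriv G (1/x - 3 * t ^ (-(1:ℝ)/3)) * (-(3 * (-(1/3) * (t ^ (-(1:ℝ)/3))^4)))) t :=
    (hG1 _).hasDerivAt.comp t hb
  have hdFa : HasDerivAt (fun s : ℝ => deriv F (1/x + 3 * s ^ (-(1:ℝ)/3)))
      (deriv (deriv F) (1/x + 3 * t ^ (-(1:ℝ)/3)) * (3 * (-(1/3) * (t ^ (-(1:ℝ)/3))^4))) t :=
    (hF2 _).hasDerivAt.comp t ha
  have hdGb : HasDerivAt (fun s : ℝ => deriv G (1/x - 3 * s ^ (-(1:ℝ)/3)))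
      (deriv (deriv G) (1/x - 3 * t ^ (-(1:ℝ)/3)) * (-(3 * (-(1/3) * (t ^ (-(1:ℝ)/3))^4)))) t :=
    (hG2 _).hasDerivAt.comp t hb
  have hddFa : HasDerivAt (fun s : ℝ => deriv (deriv F) (1/x + 3 * s ^ (-(1:ℝ)/3)))
      (deriv (deriv (deriv F)) (1/x + 3 * t ^ (-(1:ℝ)/3)) * (3 * (-(1/3) * (t ^ (-(1:ℝ)/3))^4))) t :=
    (hF3 _).hasDerivAt.comp t ha
  have hddGb : HasDerivAt (fun s : ℝ => deriv (deriv G) (1/x - 3 * s ^ (-(1:ℝ)/3)))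
      (deriv (deriv (deriv G)) (1/x - 3 * t ^ (-(1:ℝ)/3)) * (-(3 * (-(1/3) * (t ^ (-(1:ℝ)/3))^4)))) t :=
    (hG3 _).hasDerivAt.comp t hb
  have hinner := ((hFa.add hGb).add (hpm.mul (hdGb.sub hdFa))).const_mul x
  have h5 : HasDerivAt (fun s : ℝ => (s ^ (-(1:ℝ)/3))^5)
      ((5:ℕ) * (t ^ (-(1:ℝ)/3))^4 * (-(1/3) * (t ^ (-(1:ℝ)/3))^4)) t := hp.pow 5
  have hlin : HasDerivAt (fun s : ℝ => 3 * x * s) (3 * x * 1) t := (hasDerivAt_id t).const_mul (3*x)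
  have key := hinner.add (((hlin.mul h5).mul (hddFa.add hddGb)))
  refine key.congr_deriv ?_
  simp only [Pi.mul_apply, Pi.add_apply, Pi.sub_apply]
  have h3 := tp3 ht
  set p := t ^ (-(1:ℝ)/3) with hpdef
  have ht' : t = (p^3)⁻¹ := eq_inv_of_mul_eq_one_right (by rw [mul_comm]; exact h3)
  have hpne : p ≠ 0 := by
    intro h0; rw [h0] at h3; simp at h3
  rw [ht']
  field_simp
  ring

lemma step_x1 (F G : ℝ → ℝ) (hF1 : Differentiable ℝ F) (hF2 : Differentiable ℝ (deriv F))
    (hG1 : Differentiable ℝ G) (hG2 : Differentiable ℝ (deriv G))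
    (C : ℝ) {x : ℝ} (hx : x ≠ 0) (T : ℝ) :
    HasDerivAt (fun ξ : ℝ => ξ * T *
        (F (1/ξ + C) + G (1/ξ - C) + C * (deriv G (1/ξ - C) - deriv F (1/ξ + C))))
      (T * (F (1/x + C) + G (1/x - C) + C * (deriv G (1/x - C) - deriv F (1/x + C)))
        - T * (1/x) * (deriv F (1/x + C) + deriv G (1/x - C)
            + C * (deriv (deriv G) (1/x - C) - deriv (deriv F) (1/x + C)))) x := by
  have hinv : HasDerivAt (fun ξ : ℝ => 1/ξ) (-(x^2)⁻¹) x := by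
    simpa [one_div] using hasDerivAt_inv hx
  have ha : HasDerivAt (fun ξ : ℝ => 1/ξ + C) (-(x^2)⁻¹) x := hinv.add_const C
  have hb : HasDerivAt (fun ξ : ℝ => 1/ξ - C) (-(x^2)⁻¹) x := hinv.sub_const C
  have hFa : HasDerivAt (fun ξ : ℝ => F (1/ξ + C)) (deriv F (1/x + C) * (-(x^2)⁻¹)) x :=
    (hF1 _).hasDerivAt.comp x ha
  have hGb : HasDerivAt (fun ξ : ℝ => G (1/ξ - C)) (deriv G (1/x - C) * (-(x^2)⁻¹)) x :=
    (hG1 _).hasDerivAt.comp x hb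
  have hdFa : HasDerivAt (fun ξ : ℝ => deriv F (1/ξ + C))
      (deriv (deriv F) (1/x + C) * (-(x^2)⁻¹)) x := (hF2 _).hasDerivAt.comp x ha
  have hdGb : HasDerivAt (fun ξ : ℝ => deriv G (1/ξ - C))
      (deriv (deriv G) (1/x - C) * (-(x^2)⁻¹)) x := (hG2 _).hasDerivAt.comp x hb
  have hinner := (hFa.add hGb).add ((hdGb.sub hdFa).const_mul C)
  have houter : HasDerivAt (fun ξ : ℝ => ξ * T) (1 * T) x := (hasDerivAt_id x).mul_const T
  have key := houter.mul hinner
  refine key.congr_deriv ?_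
  simp only [Pi.mul_apply, Pi.add_apply, Pi.sub_apply]
  field_simp
  ring

lemma step_x2 (F G : ℝ → ℝ) (hF2 : Differentiable ℝ (deriv F))
    (hF3 : Differentiable ℝ (deriv (deriv F)))
    (hG2 : Differentiable ℝ (deriv G))
    (hG3 : Differentiable ℝ (deriv (deriv G)))
    (hF1 : Differentiable ℝ F) (hG1 : Differentiable ℝ G)
    (C : ℝ) {x : ℝ} (hx : x ≠ 0) (T : ℝ) :
    HasDerivAt (fun ξ : ℝ =>
        T * (F (1/ξ + C) + G (1/ξ - C) + C * (deriv G (1/ξ - C) - deriv F (1/ξ + C)))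
        - T * (1/ξ) * (deriv F (1/ξ + C) + deriv G (1/ξ - C)
            + C * (deriv (deriv G) (1/ξ - C) - deriv (deriv F) (1/ξ + C))))
      (T / x^3 * (deriv (deriv F) (1/x + C) + deriv (deriv G) (1/x - C)
          + C * (deriv (deriv (deriv G)) (1/x - C) - deriv (deriv (deriv F)) (1/x + C)))) x := by
  have hinv : HasDerivAt (fun ξ : ℝ => 1/ξ) (-(x^2)⁻¹) x := by
    simpa [one_div] using hasDerivAt_inv hx
  have ha : HasDerivAt (fun ξ : ℝ => 1/ξ + C) (-(x^2)⁻¹) x := hinv.add_const C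
  have hb : HasDerivAt (fun ξ : ℝ => 1/ξ - C) (-(x^2)⁻¹) x := hinv.sub_const C
  have hFa : HasDerivAt (fun ξ : ℝ => F (1/ξ + C)) (deriv F (1/x + C) * (-(x^2)⁻¹)) x :=
    (hF1 _).hasDerivAt.comp x ha
  have hGb : HasDerivAt (fun ξ : ℝ => G (1/ξ - C)) (deriv G (1/x - C) * (-(x^2)⁻¹)) x :=
    (hG1 _).hasDerivAt.comp x hb
  have hdFa : HasDerivAt (fun ξ : ℝ => deriv F (1/ξ + C))
      (deriv (deriv F) (1/x + C) * (-(x^2)⁻¹)) x := (hF2 _).hasDerivAt.comp x ha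
  have hdGb : HasDerivAt (fun ξ : ℝ => deriv G (1/ξ - C))
      (deriv (deriv G) (1/x - C) * (-(x^2)⁻¹)) x := (hG2 _).hasDerivAt.comp x hb
  have hddFa : HasDerivAt (fun ξ : ℝ => deriv (deriv F) (1/ξ + C))
      (deriv (deriv (deriv F)) (1/x + C) * (-(x^2)⁻¹)) x := (hF3 _).hasDerivAt.comp x ha
  have hddGb : HasDerivAt (fun ξ : ℝ => deriv (deriv G) (1/ξ - C))
      (deriv (deriv (deriv G)) (1/x - C) * (-(x^2)⁻¹)) x := (hG3 _).hasDerivAt.comp x hb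
  have h1 := ((hFa.add hGb).add ((hdGb.sub hdFa).const_mul C)).const_mul T
  have hS2 := (hdFa.add hdGb).add ((hddGb.sub hddFa).const_mul C)
  have h2 := (hinv.const_mul T).mul hS2
  have key := h1.sub h2
  refine key.congr_deriv ?_
  simp only [Pi.mul_apply, Pi.add_apply, Pi.sub_apply]
  field_simp
  ring

lemma step_t1 (F G : ℝ → ℝ) (hF1 : Differentiable ℝ F) (hF2 : Differentiable ℝ (deriv F))
    (hG1 : Differentiable ℝ G) (hG2 : Differentiable ℝ (deriv G))
    (x : ℝ) {t : ℝ} (ht : 0 < t) :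
    HasDerivAt (fun s : ℝ => x * s *
        (F (1/x + 3 * s ^ (-(1:ℝ)/3)) + G (1/x - 3 * s ^ (-(1:ℝ)/3))
          + 3 * s ^ (-(1:ℝ)/3) *
            (deriv G (1/x - 3 * s ^ (-(1:ℝ)/3)) - deriv F (1/x + 3 * s ^ (-(1:ℝ)/3)))))
      (x * (F (1/x + 3 * t ^ (-(1:ℝ)/3)) + G (1/x - 3 * t ^ (-(1:ℝ)/3))
          + 3 * t ^ (-(1:ℝ)/3) *
            (deriv G (1/x - 3 * t ^ (-(1:ℝ)/3)) - deriv F (1/x + 3 * t ^ (-(1:ℝ)/3))))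
        + 3 * x * t * (t ^ (-(1:ℝ)/3))^5 *
            (deriv (deriv F) (1/x + 3 * t ^ (-(1:ℝ)/3))
              + deriv (deriv G) (1/x - 3 * t ^ (-(1:ℝ)/3)))) t := by
  have hp := hasDerivAt_p ht
  have hpm : HasDerivAt (fun s : ℝ => 3 * s ^ (-(1:ℝ)/3))
      (3 * (-(1/3) * (t ^ (-(1:ℝ)/3))^4)) t := hp.const_mul 3
  have ha : HasDerivAt (fun s : ℝ => 1/x + 3 * s ^ (-(1:ℝ)/3))
      (3 * (-(1/3) * (t ^ (-(1:ℝ)/3))^4)) t := hpm.const_add (1/x)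
  have hb : HasDerivAt (fun s : ℝ => 1/x - 3 * s ^ (-(1:ℝ)/3))
      (-(3 * (-(1/3) * (t ^ (-(1:ℝ)/3))^4))) t := hpm.const_sub (1/x)
  have hFa : HasDerivAt (fun s : ℝ => F (1/x + 3 * s ^ (-(1:ℝ)/3)))
      (deriv F (1/x + 3 * t ^ (-(1:ℝ)/3)) * (3 * (-(1/3) * (t ^ (-(1:ℝ)/3))^4))) t :=
    (hF1 _).hasDerivAt.comp t ha
  have hGb : HasDerivAt (fun s : ℝ => G (1/x - 3 * s ^ (-(1:ℝ)/3)))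
      (deriv G (1/x - 3 * t ^ (-(1:ℝ)/3)) * (-(3 * (-(1/3) * (t ^ (-(1:ℝ)/3))^4)))) t :=
    (hG1 _).hasDerivAt.comp t hb
  have hdFa : HasDerivAt (fun s : ℝ => deriv F (1/x + 3 * s ^ (-(1:ℝ)/3)))
      (deriv (deriv F) (1/x + 3 * t ^ (-(1:ℝ)/3)) * (3 * (-(1/3) * (t ^ (-(1:ℝ)/3))^4))) t :=
    (hF2 _).hasDerivAt.comp t ha
  have hdGb : HasDerivAt (fun s : ℝ => deriv G (1/x - 3 * s ^ (-(1:ℝ)/3)))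
      (deriv (deriv G) (1/x - 3 * t ^ (-(1:ℝ)/3)) * (-(3 * (-(1/3) * (t ^ (-(1:ℝ)/3))^4)))) t :=
    (hG2 _).hasDerivAt.comp t hb
  have hinner := (hFa.add hGb).add (hpm.mul (hdGb.sub hdFa))
  have houter : HasDerivAt (fun s : ℝ => x * s) (x * 1) t := (hasDerivAt_id t).const_mul x
  have key := houter.mul hinner
  refine key.congr_deriv ?_
  simp only [Pi.mul_apply, Pi.add_apply, Pi.sub_apply]
  ring

/-- First partial derivative with respect to the first argument. -/
noncomputable def pdx (u : ℝ × ℝ → ℝ) : ℝ × ℝ → ℝ :=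
  fun p => deriv (fun x => u (x, p.2)) p.1

/-- First partial derivative with respect to the second argument. -/
noncomputable def pdt (u : ℝ × ℝ → ℝ) : ℝ × ℝ → ℝ :=
  fun p => deriv (fun t => u (p.1, t)) p.2
theorem stmt_16 (F G : ℝ → ℝ) (hF : ContDiff ℝ 3 F) (hG : ContDiff ℝ 3 G)
    (B : ℝ × ℝ → ℝ)
    (hB : ∀ x T : ℝ, x ≠ 0 → 0 < T →
      B (x, T) = x * T *
        (F (1 / x + 3 * T ^ (-(1 : ℝ) / 3)) + G (1 / x - 3 * T ^ (-(1 : ℝ) / 3))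
          + 3 * T ^ (-(1 : ℝ) / 3) *
            (deriv G (1 / x - 3 * T ^ (-(1 : ℝ) / 3))
              - deriv F (1 / x + 3 * T ^ (-(1 : ℝ) / 3))))) :
    ∀ x T : ℝ, x ≠ 0 → 0 < T →
      pdt (pdt B) (x, T)
        = T ^ (-(8 : ℝ) / 3) * x ^ 4 * pdx (pdx B) (x, T) := by
  obtain ⟨hF1, hF2, hF3⟩ := diff3 hF
  obtain ⟨hG1, hG2, hG3⟩ := diff3 hG
  intro x T hx hT
  -- first t-derivative
  have e1 : ∀ t : ℝ, 0 < t → pdt B (x, t) =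
      x * (F (1/x + 3 * t ^ (-(1:ℝ)/3)) + G (1/x - 3 * t ^ (-(1:ℝ)/3))
          + 3 * t ^ (-(1:ℝ)/3) *
            (deriv G (1/x - 3 * t ^ (-(1:ℝ)/3)) - deriv F (1/x + 3 * t ^ (-(1:ℝ)/3))))
        + 3 * x * t * (t ^ (-(1:ℝ)/3))^5 *
            (deriv (deriv F) (1/x + 3 * t ^ (-(1:ℝ)/3))
              + deriv (deriv G) (1/x - 3 * t ^ (-(1:ℝ)/3))) := by
    intro t ht
    show deriv (fun τ => B (x, τ)) t = _
    have hev : (fun τ : ℝ => B (x, τ)) =ᶠ[nhds t] (fun τ : ℝ => x * τ *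
        (F (1/x + 3 * τ ^ (-(1:ℝ)/3)) + G (1/x - 3 * τ ^ (-(1:ℝ)/3))
          + 3 * τ ^ (-(1:ℝ)/3) *
            (deriv G (1/x - 3 * τ ^ (-(1:ℝ)/3)) - deriv F (1/x + 3 * τ ^ (-(1:ℝ)/3))))) := by
      filter_upwards [Ioi_mem_nhds ht] with τ hτ
      exact hB x τ hx hτ
    rw [hev.deriv_eq]
    exact (step_t1 F G hF1 hF2 hG1 hG2 x ht).deriv
  -- second t-derivative
  have e2 : pdt (pdt B) (x, T) =
      x * (T ^ (-(1:ℝ)/3))^5 *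
          (deriv (deriv F) (1/x + 3 * T ^ (-(1:ℝ)/3))
            + deriv (deriv G) (1/x - 3 * T ^ (-(1:ℝ)/3)))
        + 3 * x * (T ^ (-(1:ℝ)/3))^6 *
          (deriv (deriv (deriv G)) (1/x - 3 * T ^ (-(1:ℝ)/3))
            - deriv (deriv (deriv F)) (1/x + 3 * T ^ (-(1:ℝ)/3))) := by
    show deriv (fun t => pdt B (x, t)) T = _
    have hev : (fun t : ℝ => pdt B (x, t)) =ᶠ[nhds T] (fun t : ℝ =>
        x * (F (1/x + 3 * t ^ (-(1:ℝ)/3)) + G (1/x - 3 * t ^ (-(1:ℝ)/3))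
          + 3 * t ^ (-(1:ℝ)/3) *
            (deriv G (1/x - 3 * t ^ (-(1:ℝ)/3)) - deriv F (1/x + 3 * t ^ (-(1:ℝ)/3))))
        + 3 * x * t * (t ^ (-(1:ℝ)/3))^5 *
            (deriv (deriv F) (1/x + 3 * t ^ (-(1:ℝ)/3))
              + deriv (deriv G) (1/x - 3 * t ^ (-(1:ℝ)/3)))) := by
      filter_upwards [Ioi_mem_nhds hT] with τ hτ
      exact e1 τ hτ
    rw [hev.deriv_eq]
    exact (step_t2 F G hF1 hF2 hF3 hG1 hG2 hG3 x hT).deriv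
  -- first x-derivative
  have e3 : ∀ ξ : ℝ, ξ ≠ 0 → pdx B (ξ, T) =
      T * (F (1/ξ + 3 * T ^ (-(1:ℝ)/3)) + G (1/ξ - 3 * T ^ (-(1:ℝ)/3))
          + 3 * T ^ (-(1:ℝ)/3) * (deriv G (1/ξ - 3 * T ^ (-(1:ℝ)/3)) - deriv F (1/ξ + 3 * T ^ (-(1:ℝ)/3))))
        - T * (1/ξ) * (deriv F (1/ξ + 3 * T ^ (-(1:ℝ)/3)) + deriv G (1/ξ - 3 * T ^ (-(1:ℝ)/3))
            + 3 * T ^ (-(1:ℝ)/3) * (deriv (deriv G) (1/ξ - 3 * T ^ (-(1:ℝ)/3))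
              - deriv (deriv F) (1/ξ + 3 * T ^ (-(1:ℝ)/3)))) := by
    intro ξ hξ
    show deriv (fun η => B (η, T)) ξ = _
    have hev : (fun η : ℝ => B (η, T)) =ᶠ[nhds ξ] (fun η : ℝ => η * T *
        (F (1/η + 3 * T ^ (-(1:ℝ)/3)) + G (1/η - 3 * T ^ (-(1:ℝ)/3))
          + 3 * T ^ (-(1:ℝ)/3) * (deriv G (1/η - 3 * T ^ (-(1:ℝ)/3))
            - deriv F (1/η + 3 * T ^ (-(1:ℝ)/3))))) := by
      filter_upwards [compl_singleton_mem_nhds hξ] with η hη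
      exact hB η T (by simpa using hη) hT
    rw [hev.deriv_eq]
    exact (step_x1 F G hF1 hF2 hG1 hG2 (3 * T ^ (-(1:ℝ)/3)) hξ T).deriv
  -- second x-derivative
  have e4 : pdx (pdx B) (x, T) =
      T / x^3 * (deriv (deriv F) (1/x + 3 * T ^ (-(1:ℝ)/3)) + deriv (deriv G) (1/x - 3 * T ^ (-(1:ℝ)/3))
          + 3 * T ^ (-(1:ℝ)/3) * (deriv (deriv (deriv G)) (1/x - 3 * T ^ (-(1:ℝ)/3))
            - deriv (deriv (deriv F)) (1/x + 3 * T ^ (-(1:ℝ)/3)))) := by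
    show deriv (fun η => pdx B (η, T)) x = _
    have hev : (fun η : ℝ => pdx B (η, T)) =ᶠ[nhds x] (fun η : ℝ =>
        T * (F (1/η + 3 * T ^ (-(1:ℝ)/3)) + G (1/η - 3 * T ^ (-(1:ℝ)/3))
          + 3 * T ^ (-(1:ℝ)/3) * (deriv G (1/η - 3 * T ^ (-(1:ℝ)/3)) - deriv F (1/η + 3 * T ^ (-(1:ℝ)/3))))
        - T * (1/η) * (deriv F (1/η + 3 * T ^ (-(1:ℝ)/3)) + deriv G (1/η - 3 * T ^ (-(1:ℝ)/3))
            + 3 * T ^ (-(1:ℝ)/3) * (deriv (deriv G) (1/η - 3 * T ^ (-(1:ℝ)/3))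
              - deriv (deriv F) (1/η + 3 * T ^ (-(1:ℝ)/3))))) := by
      filter_upwards [compl_singleton_mem_nhds hx] with η hη
      exact e3 η (by simpa using hη)
    rw [hev.deriv_eq]
    exact (step_x2 F G hF2 hF3 hG2 hG3 hF1 hG1 (3 * T ^ (-(1:ℝ)/3)) hx T).deriv
  rw [e2, e4]
  have h8 : T ^ (-(8:ℝ)/3) = (T ^ (-(1:ℝ)/3))^8 := by
    rw [← Real.rpow_natCast (T ^ (-(1:ℝ)/3)) 8, ← Real.rpow_mul hT.le]; norm_num
  rw [h8]
  have h3 := tp3 hT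
  set p := T ^ (-(1:ℝ)/3) with hpdef
  have ht' : T = (p^3)⁻¹ := eq_inv_of_mul_eq_one_right (by rw [mul_comm]; exact h3)
  have hpne : p ≠ 0 := by intro h0; rw [h0] at h3; simp at h3
  rw [ht']
  field_simp
end

section
/- Let B : ℝ × ℝ → ℝ be three times continuously differentiable on {(x,T) : x > 0 and T > 0} and satisfy the wave equation ∂²B/∂T²(x,T) = T^{−4/3} · x⁴ · ∂²B/∂x²(x,T) for all x > 0 and T > 0. Then there exist functions F, G : ℝ → ℝ, with F three times continuously differentiable on (0,∞) and G three times continuously differentiable on ℝ, such that B(x,T) = x · ( F(1/x + 3 T^{1/3}) + G(1/x − 3 T^{1/3}) + 3 T^{1/3} · ( G'(1/x − 3 T^{1/3}) − F'(1/x + 3 T^{1/3}) ) ) for all x > 0 and T > 0. -/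
open Set Filter

namespace S19

/-- chain rule along a curve -/
lemma hasDerivAt_comp2 {f : ℝ × ℝ → ℝ} {γ₁ γ₂ : ℝ → ℝ} {d₁ d₂ t : ℝ}
    (hf : DifferentiableAt ℝ f (γ₁ t, γ₂ t))
    (h₁ : HasDerivAt γ₁ d₁ t) (h₂ : HasDerivAt γ₂ d₂ t) :
    HasDerivAt (fun s => f (γ₁ s, γ₂ s))
      (pdx f (γ₁ t, γ₂ t) * d₁ + pdt f (γ₁ t, γ₂ t) * d₂) t := by
  have h : HasDerivAt (fun s => (γ₁ s, γ₂ s)) ((d₁, d₂) : ℝ × ℝ) t := h₁.prodMk h₂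
  have H := hf.hasFDerivAt.comp_hasDerivAt t h
  have hx : HasDerivAt (fun x => f (x, γ₂ t)) (fderiv ℝ f (γ₁ t, γ₂ t) (1, 0)) (γ₁ t) := by
    have hc : HasDerivAt (fun x : ℝ => (x, γ₂ t)) ((1, 0) : ℝ × ℝ) (γ₁ t) :=
      (hasDerivAt_id _).prodMk (hasDerivAt_const _ _)
    exact hf.hasFDerivAt.comp_hasDerivAt (γ₁ t) hc
  have ht : HasDerivAt (fun y => f (γ₁ t, y)) (fderiv ℝ f (γ₁ t, γ₂ t) (0, 1)) (γ₂ t) := by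
    have hc : HasDerivAt (fun y : ℝ => (γ₁ t, y)) ((0, 1) : ℝ × ℝ) (γ₂ t) :=
      (hasDerivAt_const _ _).prodMk (hasDerivAt_id _)
    exact hf.hasFDerivAt.comp_hasDerivAt (γ₂ t) hc
  have e1 : pdx f (γ₁ t, γ₂ t) = fderiv ℝ f (γ₁ t, γ₂ t) (1, 0) := hx.deriv
  have e2 : pdt f (γ₁ t, γ₂ t) = fderiv ℝ f (γ₁ t, γ₂ t) (0, 1) := ht.deriv
  rw [e1, e2]
  refine H.congr_deriv ?_
  have : ((d₁, d₂) : ℝ × ℝ) = d₁ • ((1, 0) : ℝ × ℝ) + d₂ • ((0, 1) : ℝ × ℝ) := by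
    simp [Prod.ext_iff]
  rw [this, map_add, (fderiv ℝ f _).map_smul, (fderiv ℝ f _).map_smul]
  simp [smul_eq_mul]; ring

lemma slice_x {f : ℝ × ℝ → ℝ} {p : ℝ × ℝ} (hf : DifferentiableAt ℝ f p) :
    HasDerivAt (fun x => f (x, p.2)) (pdx f p) p.1 := by
  have := hasDerivAt_comp2 (f := f) (γ₁ := fun x => x) (γ₂ := fun _ => p.2) (t := p.1)
    (by simpa using hf) (hasDerivAt_id _) (hasDerivAt_const _ _)
  simpa using this

lemma slice_t {f : ℝ × ℝ → ℝ} {p : ℝ × ℝ} (hf : DifferentiableAt ℝ f p) :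
    HasDerivAt (fun y => f (p.1, y)) (pdt f p) p.2 := by
  have := hasDerivAt_comp2 (f := f) (γ₁ := fun _ => p.1) (γ₂ := fun y => y) (t := p.2)
    (by simpa using hf) (hasDerivAt_const _ _) (hasDerivAt_id _)
  simpa using this

lemma contDiffOn_pdx {f : ℝ × ℝ → ℝ} {U : Set (ℝ × ℝ)} {n m : WithTop ℕ∞}
    (hU : IsOpen U) (hf : ContDiffOn ℝ n f U) (h : m + 1 ≤ n) :
    ContDiffOn ℝ m (pdx f) U := by
  have h1 : ContDiffOn ℝ m (fun p => fderiv ℝ f p ((1, 0) : ℝ × ℝ)) U :=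
    (hf.fderiv_of_isOpen hU h).clm_apply contDiffOn_const
  refine h1.congr fun q hq => ?_
  have hd : DifferentiableAt ℝ f q := by
    have h1n : (1 : WithTop ℕ∞) ≤ n :=
      le_trans (by simpa using add_le_add_right (zero_le m) 1) h
    exact (hf.contDiffAt (hU.mem_nhds hq)).differentiableAt (by positivity)
  have hx : HasDerivAt (fun x => f (x, q.2)) (fderiv ℝ f q ((1, 0) : ℝ × ℝ)) q.1 := by
    have hc : HasDerivAt (fun x : ℝ => (x, q.2)) ((1, 0) : ℝ × ℝ) q.1 :=
      (hasDerivAt_id _).prodMk (hasDerivAt_const _ _)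
    exact hd.hasFDerivAt.comp_hasDerivAt q.1 hc
  exact hx.deriv

lemma contDiffOn_pdt {f : ℝ × ℝ → ℝ} {U : Set (ℝ × ℝ)} {n m : WithTop ℕ∞}
    (hU : IsOpen U) (hf : ContDiffOn ℝ n f U) (h : m + 1 ≤ n) :
    ContDiffOn ℝ m (pdt f) U := by
  have h1 : ContDiffOn ℝ m (fun p => fderiv ℝ f p ((0, 1) : ℝ × ℝ)) U :=
    (hf.fderiv_of_isOpen hU h).clm_apply contDiffOn_const
  refine h1.congr fun q hq => ?_
  have hd : DifferentiableAt ℝ f q := by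
    have h1n : (1 : WithTop ℕ∞) ≤ n :=
      le_trans (by simpa using add_le_add_right (zero_le m) 1) h
    exact (hf.contDiffAt (hU.mem_nhds hq)).differentiableAt (by positivity)
  have hx : HasDerivAt (fun y => f (q.1, y)) (fderiv ℝ f q ((0, 1) : ℝ × ℝ)) q.2 := by
    have hc : HasDerivAt (fun y : ℝ => (q.1, y)) ((0, 1) : ℝ × ℝ) q.2 :=
      (hasDerivAt_const _ _).prodMk (hasDerivAt_id _)
    exact hd.hasFDerivAt.comp_hasDerivAt q.2 hc
  exact hx.deriv



lemma pdx_eq_fderiv {f : ℝ × ℝ → ℝ} {q : ℝ × ℝ} (hf : DifferentiableAt ℝ f q) :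
    pdx f q = fderiv ℝ f q ((1, 0) : ℝ × ℝ) := by
  have hc : HasDerivAt (fun x : ℝ => ((x, q.2) : ℝ × ℝ)) ((1, 0) : ℝ × ℝ) q.1 :=
    (hasDerivAt_id _).prodMk (hasDerivAt_const _ _)
  exact (hf.hasFDerivAt.comp_hasDerivAt q.1 (by simpa using hc)).deriv

lemma pdt_eq_fderiv {f : ℝ × ℝ → ℝ} {q : ℝ × ℝ} (hf : DifferentiableAt ℝ f q) :
    pdt f q = fderiv ℝ f q ((0, 1) : ℝ × ℝ) := by
  have hc : HasDerivAt (fun y : ℝ => ((q.1, y) : ℝ × ℝ)) ((0, 1) : ℝ × ℝ) q.2 :=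
    (hasDerivAt_const _ _).prodMk (hasDerivAt_id _)
  exact (hf.hasFDerivAt.comp_hasDerivAt q.2 (by simpa using hc)).deriv

lemma pdx_pdt_symm {f : ℝ × ℝ → ℝ} {U : Set (ℝ × ℝ)} (hU : IsOpen U)
    (hf : ContDiffOn ℝ 2 f U) {p : ℝ × ℝ} (hp : p ∈ U) :
    pdx (pdt f) p = pdt (pdx f) p := by
  have hfa : ContDiffAt ℝ 2 f p := hf.contDiffAt (hU.mem_nhds hp)
  have hsymm := hfa.isSymmSndFDerivAt (by simp)
  have hdf : DifferentiableAt ℝ (fderiv ℝ f) p :=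
    (hfa.fderiv_right (m := 1) le_rfl).differentiableAt one_ne_zero
  -- d/dy (fderiv f (p.1, y) w) at p.2
  have keyt : ∀ w : ℝ × ℝ,
      HasDerivAt (fun y => fderiv ℝ f (p.1, y) w) (fderiv ℝ (fderiv ℝ f) p ((0,1) : ℝ × ℝ) w) p.2 := by
    intro w
    have hc : HasDerivAt (fun y : ℝ => ((p.1, y) : ℝ × ℝ)) ((0, 1) : ℝ × ℝ) p.2 :=
      (hasDerivAt_const _ _).prodMk (hasDerivAt_id _)
    have hcomp : HasDerivAt (fun y => fderiv ℝ f (p.1, y))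
        (fderiv ℝ (fderiv ℝ f) p ((0,1) : ℝ × ℝ)) p.2 := by
      have := hdf.hasFDerivAt.comp_hasDerivAt p.2 (by simpa using hc)
      exact this
    simpa using hcomp.clm_apply (hasDerivAt_const _ w)
  have keyx : ∀ w : ℝ × ℝ,
      HasDerivAt (fun x => fderiv ℝ f (x, p.2) w) (fderiv ℝ (fderiv ℝ f) p ((1,0) : ℝ × ℝ) w) p.1 := by
    intro w
    have hc : HasDerivAt (fun x : ℝ => ((x, p.2) : ℝ × ℝ)) ((1, 0) : ℝ × ℝ) p.1 :=
      (hasDerivAt_id _).prodMk (hasDerivAt_const _ _)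
    have hcomp : HasDerivAt (fun x => fderiv ℝ f (x, p.2))
        (fderiv ℝ (fderiv ℝ f) p ((1,0) : ℝ × ℝ)) p.1 := by
      have := hdf.hasFDerivAt.comp_hasDerivAt p.1 (by simpa using hc)
      exact this
    simpa using hcomp.clm_apply (hasDerivAt_const _ w)
  have hdiff : ∀ q ∈ U, DifferentiableAt ℝ f q := fun q hq =>
    (hf.contDiffAt (hU.mem_nhds hq)).differentiableAt two_ne_zero
  -- pdt f agrees with fderiv-formula near p
  have hUnx : ∀ᶠ x in nhds p.1, ((x, p.2) : ℝ × ℝ) ∈ U := by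
    have : Continuous (fun x : ℝ => ((x, p.2) : ℝ × ℝ)) := by fun_prop
    exact this.continuousAt.preimage_mem_nhds (hU.mem_nhds (by simpa using hp))
  have hUnt : ∀ᶠ y in nhds p.2, ((p.1, y) : ℝ × ℝ) ∈ U := by
    have : Continuous (fun y : ℝ => ((p.1, y) : ℝ × ℝ)) := by fun_prop
    exact this.continuousAt.preimage_mem_nhds (hU.mem_nhds (by simpa using hp))
  have e1 : pdx (pdt f) p = fderiv ℝ (fderiv ℝ f) p ((1,0) : ℝ × ℝ) ((0,1) : ℝ × ℝ) := by
    have heq : (fun x => pdt f (x, p.2)) =ᶠ[nhds p.1]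
        (fun x => fderiv ℝ f (x, p.2) ((0,1) : ℝ × ℝ)) := by
      filter_upwards [hUnx] with x hx
      exact pdt_eq_fderiv (hdiff _ hx)
    show deriv (fun x => pdt f (x, p.2)) p.1 = _
    rw [heq.deriv_eq]
    exact (keyx _).deriv
  have e2 : pdt (pdx f) p = fderiv ℝ (fderiv ℝ f) p ((0,1) : ℝ × ℝ) ((1,0) : ℝ × ℝ) := by
    have heq : (fun y => pdx f (p.1, y)) =ᶠ[nhds p.2]
        (fun y => fderiv ℝ f (p.1, y) ((1,0) : ℝ × ℝ)) := by
      filter_upwards [hUnt] with y hy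
      exact pdx_eq_fderiv (hdiff _ hy)
    show deriv (fun y => pdx f (p.1, y)) p.2 = _
    rw [heq.deriv_eq]
    exact (keyt _).deriv
  rw [e1, e2, hsymm]

/-- constancy along a segment from zero derivative -/
lemma const_of_deriv_zero {f : ℝ → ℝ} {a b : ℝ}
    (h : ∀ t ∈ Set.uIcc a b, HasDerivAt f 0 t) : f b = f a := by
  rcases le_total a b with hab | hab
  · rw [Set.uIcc_of_le hab] at h
    have := constant_of_has_deriv_right_zero (f := f) (a := a) (b := b)
      (fun t ht => ((h t ht).continuousAt).continuousWithinAt)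
      (fun t ht => (h t (Set.Ico_subset_Icc_self ht)).hasDerivWithinAt)
    exact this b (Set.right_mem_Icc.2 hab)
  · rw [Set.uIcc_of_ge hab] at h
    have := constant_of_has_deriv_right_zero (f := f) (a := b) (b := a)
      (fun t ht => ((h t ht).continuousAt).continuousWithinAt)
      (fun t ht => (h t (Set.Ico_subset_Icc_self ht)).hasDerivWithinAt)
    exact (this a (Set.right_mem_Icc.2 hab)).symm

lemma affine_of_deriv_const {f : ℝ → ℝ} {a b c : ℝ}
    (h : ∀ t ∈ Set.uIcc a b, HasDerivAt f c t) : f b = f a + c * (b - a) := by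
  have h' : ∀ t ∈ Set.uIcc a b, HasDerivAt (fun t => f t - c * t) 0 t := by
    intro t ht
    have := (h t ht).sub ((hasDerivAt_id t).const_mul c)
    simp at this
    exact this
  have := const_of_deriv_zero h'
  have h2 : f b - c * b = f a - c * a := this
  linarith

/-- FTC on an open order-connected set -/
lemma ftc_hasDerivAt {g : ℝ → ℝ} {s : Set ℝ} (hs : IsOpen s) (hsc : OrdConnected s)
    (hg : ContinuousOn g s) {z u : ℝ} (hz : z ∈ s) (hu : u ∈ s) :
    HasDerivAt (fun w => ∫ t in z..w, g t) (g u) u := by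
  have hsub : Set.uIcc z u ⊆ s := hsc.uIcc_subset hz hu
  have hint : IntervalIntegrable g MeasureTheory.volume z u :=
    (hg.mono hsub).intervalIntegrable
  have hmeas : StronglyMeasurableAtFilter g (nhds u) :=
    ContinuousOn.stronglyMeasurableAtFilter hs hg u hu
  exact intervalIntegral.integral_hasDerivAt_right hint hmeas
    (hg.continuousAt (hs.mem_nhds hu))


/-! ### Main development -/

def Om : Set (ℝ × ℝ) := {p | |p.2| < p.1}
def Qd : Set (ℝ × ℝ) := {p | 0 < p.1 ∧ 0 < p.2}

noncomputable def Ph (p : ℝ × ℝ) : ℝ × ℝ := (2 / (p.1 + p.2), ((p.1 - p.2) / 6) ^ 3)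

noncomputable def EE (B : ℝ × ℝ → ℝ) : ℝ × ℝ → ℝ := fun p => ((p.1 + p.2) / 2) * B (Ph p)

lemma isOpen_Om : IsOpen Om := by
  have : Om = {p : ℝ × ℝ | p.2 < p.1} ∩ {p | -p.1 < p.2} := by
    ext p; simp only [Om, Set.mem_setOf_eq, Set.mem_inter_iff, abs_lt]; tauto
  rw [this]
  exact (isOpen_lt continuous_snd continuous_fst).inter
    (isOpen_lt continuous_fst.neg continuous_snd)

lemma isOpen_Qd : IsOpen Qd := by
  exact (isOpen_lt continuous_const continuous_fst).inter
    (isOpen_lt continuous_const continuous_snd)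

lemma Om_sum_pos {p : ℝ × ℝ} (hp : p ∈ Om) : 0 < p.1 + p.2 := by
  have hp' : |p.2| < p.1 := hp
  have := abs_lt.1 hp'; rcases this with ⟨h1, _⟩; linarith

lemma Om_diff_pos {p : ℝ × ℝ} (hp : p ∈ Om) : 0 < p.1 - p.2 := by
  have hp' : |p.2| < p.1 := hp
  have := abs_lt.1 hp'; rcases this with ⟨_, h2⟩; linarith

lemma Om_fst_pos {p : ℝ × ℝ} (hp : p ∈ Om) : 0 < p.1 := by
  have hp' : |p.2| < p.1 := hp
  exact lt_of_le_of_lt (abs_nonneg _) hp'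

lemma Ph_mem {p : ℝ × ℝ} (hp : p ∈ Om) : Ph p ∈ Qd := by
  constructor
  · exact div_pos (by norm_num) (Om_sum_pos hp)
  · exact pow_pos (div_pos (Om_diff_pos hp) (by norm_num)) 3

lemma contDiffOn_Ph : ContDiffOn ℝ 3 Ph Om := by
  apply ContDiffOn.prodMk
  · exact ContDiffOn.div contDiffOn_const
      ((contDiff_fst.add contDiff_snd).contDiffOn)
      (fun p hp => ne_of_gt (Om_sum_pos hp))
  · exact (((contDiff_fst.sub contDiff_snd).div_const 6).pow 3).contDiffOn

section withB
variable {B : ℝ × ℝ → ℝ}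

lemma hEE (hB : ContDiffOn ℝ 3 B Qd) : ContDiffOn ℝ 3 (EE B) Om := by
  apply ContDiffOn.mul
  · exact ((contDiff_fst.add contDiff_snd).div_const 2).contDiffOn
  · exact hB.comp contDiffOn_Ph (fun p hp => Ph_mem hp)

noncomputable def e1f (B : ℝ × ℝ → ℝ) : ℝ × ℝ → ℝ := fun p =>
  B (Ph p) / 2 - pdx B (Ph p) / (p.1 + p.2)
    + (p.1 + p.2) * (p.1 - p.2) ^ 2 * pdt B (Ph p) / 144

noncomputable def e2f (B : ℝ × ℝ → ℝ) : ℝ × ℝ → ℝ := fun p =>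
  B (Ph p) / 2 - pdx B (Ph p) / (p.1 + p.2)
    - (p.1 + p.2) * (p.1 - p.2) ^ 2 * pdt B (Ph p) / 144

lemma hasDerivAt_EE_x (hB : ContDiffOn ℝ 3 B Qd) {p : ℝ × ℝ} (hp : p ∈ Om) :
    HasDerivAt (fun x => EE B (x, p.2)) (e1f B p) p.1 := by
  have h1 : (0:ℝ) < p.1 + p.2 := Om_sum_pos hp
  have hBd : DifferentiableAt ℝ B (Ph p) :=
    (hB.contDiffAt (isOpen_Qd.mem_nhds (Ph_mem hp))).differentiableAt (by norm_num)
  have hγ1 : HasDerivAt (fun x : ℝ => 2 / (x + p.2)) (-2 / (p.1 + p.2) ^ 2) p.1 := by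
    have := (hasDerivAt_const p.1 (2:ℝ)).div ((hasDerivAt_id p.1).add_const p.2)
      (ne_of_gt h1)
    exact this.congr_deriv (by simp only [id_eq]; ring)
  have hγ2 : HasDerivAt (fun x : ℝ => ((x - p.2) / 6) ^ 3)
      (((p.1 - p.2) / 6) ^ 2 / 2) p.1 := by
    have := (((hasDerivAt_id p.1).sub_const p.2).div_const 6).pow 3
    exact this.congr_deriv (by simp only [id_eq]; push_cast; ring)
  have hcomp := hasDerivAt_comp2 (f := B) (γ₁ := fun x : ℝ => 2 / (x + p.2))
    (γ₂ := fun x : ℝ => ((x - p.2) / 6) ^ 3) (t := p.1) hBd hγ1 hγ2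
  have hlin : HasDerivAt (fun x : ℝ => (x + p.2) / 2) (1 / 2) p.1 :=
    ((hasDerivAt_id p.1).add_const p.2).div_const 2
  have htot := hlin.mul hcomp
  have heq : (fun x => EE B (x, p.2))
      = fun x => ((x + p.2) / 2) * B (2 / (x + p.2), ((x - p.2) / 6) ^ 3) := rfl
  rw [heq]
  refine htot.congr_deriv ?_
  symm
  simp only [e1f, Ph]
  field_simp
  ring

lemma hasDerivAt_EE_t (hB : ContDiffOn ℝ 3 B Qd) {p : ℝ × ℝ} (hp : p ∈ Om) :
    HasDerivAt (fun y => EE B (p.1, y)) (e2f B p) p.2 := by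
  have h1 : (0:ℝ) < p.1 + p.2 := Om_sum_pos hp
  have hBd : DifferentiableAt ℝ B (Ph p) :=
    (hB.contDiffAt (isOpen_Qd.mem_nhds (Ph_mem hp))).differentiableAt (by norm_num)
  have hγ1 : HasDerivAt (fun y : ℝ => 2 / (p.1 + y)) (-2 / (p.1 + p.2) ^ 2) p.2 := by
    have := (hasDerivAt_const p.2 (2:ℝ)).div ((hasDerivAt_id p.2).const_add p.1)
      (ne_of_gt h1)
    exact this.congr_deriv (by simp only [id_eq]; ring)
  have hγ2 : HasDerivAt (fun y : ℝ => ((p.1 - y) / 6) ^ 3)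
      (-(((p.1 - p.2) / 6) ^ 2 / 2)) p.2 := by
    have := (((hasDerivAt_id p.2).const_sub p.1).div_const 6).pow 3
    exact this.congr_deriv (by simp only [id_eq]; push_cast; ring)
  have hcomp := hasDerivAt_comp2 (f := B) (γ₁ := fun y : ℝ => 2 / (p.1 + y))
    (γ₂ := fun y : ℝ => ((p.1 - y) / 6) ^ 3) (t := p.2) hBd hγ1 hγ2
  have hlin : HasDerivAt (fun y : ℝ => (p.1 + y) / 2) (1 / 2) p.2 :=
    ((hasDerivAt_id p.2).const_add p.1).div_const 2
  have htot := hlin.mul hcomp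
  have heq : (fun y => EE B (p.1, y))
      = fun y => ((p.1 + y) / 2) * B (2 / (p.1 + y), ((p.1 - y) / 6) ^ 3) := rfl
  rw [heq]
  refine htot.congr_deriv ?_
  symm
  simp only [e2f, Ph]
  field_simp
  ring

lemma pdx_EE_eq (hB : ContDiffOn ℝ 3 B Qd) {p : ℝ × ℝ} (hp : p ∈ Om) :
    pdx (EE B) p = e1f B p := (hasDerivAt_EE_x hB hp).deriv

lemma pdt_EE_eq (hB : ContDiffOn ℝ 3 B Qd) {p : ℝ × ℝ} (hp : p ∈ Om) :
    pdt (EE B) p = e2f B p := (hasDerivAt_EE_t hB hp).deriv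

end withB

lemma rpow_cube_neg43 {y : ℝ} (hy : 0 < y) : ((y ^ 3 : ℝ)) ^ (-(4:ℝ)/3) = 1 / y ^ 4 := by
  rw [← Real.rpow_natCast y 3, ← Real.rpow_mul hy.le]
  have h : ((3:ℕ):ℝ) * (-(4:ℝ)/3) = ((-4 : ℤ) : ℝ) := by push_cast; ring
  rw [h, Real.rpow_intCast, zpow_neg, ← zpow_natCast y 4]
  norm_num

noncomputable def E1 (B : ℝ × ℝ → ℝ) := pdx (EE B)
noncomputable def E2 (B : ℝ × ℝ → ℝ) := pdt (EE B)
noncomputable def E11 (B : ℝ × ℝ → ℝ) := pdx (E1 B)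
noncomputable def E12 (B : ℝ × ℝ → ℝ) := pdt (E1 B)
noncomputable def E21 (B : ℝ × ℝ → ℝ) := pdx (E2 B)
noncomputable def E22 (B : ℝ × ℝ → ℝ) := pdt (E2 B)

section withB2
variable {B : ℝ × ℝ → ℝ} (hB : ContDiffOn ℝ 3 B Qd)
include hB

lemma hE1 : ContDiffOn ℝ 2 (E1 B) Om := contDiffOn_pdx isOpen_Om (hEE hB) (by norm_num)
lemma hE2 : ContDiffOn ℝ 2 (E2 B) Om := contDiffOn_pdt isOpen_Om (hEE hB) (by norm_num)
lemma hE11 : ContDiffOn ℝ 1 (E11 B) Om := contDiffOn_pdx isOpen_Om (hE1 hB) (by norm_num)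
lemma hE12 : ContDiffOn ℝ 1 (E12 B) Om := contDiffOn_pdt isOpen_Om (hE1 hB) (by norm_num)
lemma hE21 : ContDiffOn ℝ 1 (E21 B) Om := contDiffOn_pdx isOpen_Om (hE2 hB) (by norm_num)
lemma hE22 : ContDiffOn ℝ 1 (E22 B) Om := contDiffOn_pdt isOpen_Om (hE2 hB) (by norm_num)

end withB2

lemma diffAt_of_C1 {f : ℝ × ℝ → ℝ} {U : Set (ℝ × ℝ)} (hU : IsOpen U)
    (hf : ContDiffOn ℝ 1 f U) {p : ℝ × ℝ} (hp : p ∈ U) : DifferentiableAt ℝ f p :=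
  (hf.contDiffAt (hU.mem_nhds hp)).differentiableAt one_ne_zero

lemma evOm_t {p : ℝ × ℝ} (hp : p ∈ Om) : ∀ᶠ t in nhds p.2, ((p.1, t) : ℝ × ℝ) ∈ Om := by
  have hc : Continuous (fun t : ℝ => ((p.1, t) : ℝ × ℝ)) := by fun_prop
  exact hc.continuousAt.preimage_mem_nhds (isOpen_Om.mem_nhds (by simpa using hp))

lemma evOm_x {p : ℝ × ℝ} (hp : p ∈ Om) : ∀ᶠ t in nhds p.1, ((t, p.2) : ℝ × ℝ) ∈ Om := by
  have hc : Continuous (fun t : ℝ => ((t, p.2) : ℝ × ℝ)) := by fun_prop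
  exact hc.continuousAt.preimage_mem_nhds (isOpen_Om.mem_nhds (by simpa using hp))


noncomputable def Hf (B : ℝ × ℝ → ℝ) : ℝ × ℝ → ℝ := fun p =>
  2 * (E1 B p - E2 B p) / (p.1 - p.2)

noncomputable def pf (B : ℝ × ℝ → ℝ) : ℝ → ℝ := fun u => 2 * E11 B (u, 0) / u

noncomputable def u0 (v : ℝ) : ℝ := Real.sqrt (v ^ 2 + 1)

noncomputable def qf (B : ℝ × ℝ → ℝ) : ℝ → ℝ := fun v =>
  -2 * E22 B (u0 v, v) / (u0 v - v)

noncomputable def phif (B : ℝ × ℝ → ℝ) : ℝ → ℝ := fun u => ∫ t in (1:ℝ)..u, pf B t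

noncomputable def psif (B : ℝ × ℝ → ℝ) : ℝ → ℝ := fun v => ∫ t in (0:ℝ)..v, qf B t

lemma u0_gt_abs (v : ℝ) : |v| < u0 v := by
  have h1 : |v| = Real.sqrt (v ^ 2) := by
    rw [Real.sqrt_sq_eq_abs]
  rw [h1]
  exact Real.sqrt_lt_sqrt (sq_nonneg v) (lt_add_one _)

lemma u0_mem (v : ℝ) : ((u0 v, v) : ℝ × ℝ) ∈ Om := u0_gt_abs v

lemma continuous_u0 : Continuous u0 := by
  unfold u0; fun_prop

section contB
variable {B : ℝ × ℝ → ℝ} (hB : ContDiffOn ℝ 3 B Qd)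
include hB

lemma pf_contOn : ContinuousOn (pf B) (Set.Ioi 0) := by
  have h1 : ContinuousOn (fun u : ℝ => E11 B (u, 0)) (Set.Ioi 0) := by
    apply ContinuousOn.comp ((hE11 hB).continuousOn)
      (Continuous.continuousOn (by fun_prop))
    intro u hu
    show |(0:ℝ)| < u
    simpa using (hu : (0:ℝ) < u)
  exact (continuousOn_const.mul h1).div continuousOn_id (fun u hu => ne_of_gt hu)

lemma qf_cont : Continuous (qf B) := by
  have hcomp : Continuous (fun v : ℝ => E22 B (u0 v, v)) :=
    (hE22 hB).continuousOn.comp_continuous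
      (continuous_u0.prodMk continuous_id) u0_mem
  apply Continuous.div (continuous_const.mul hcomp) (continuous_u0.sub continuous_id)
  intro v
  have h1 : v < u0 v := lt_of_le_of_lt (le_abs_self v) (u0_gt_abs v)
  exact ne_of_gt (sub_pos.2 h1)

lemma hphi {u : ℝ} (hu : 0 < u) : HasDerivAt (phif B) (pf B u) u :=
  ftc_hasDerivAt isOpen_Ioi Set.ordConnected_Ioi (pf_contOn hB) (by norm_num) hu

lemma hpsi (v : ℝ) : HasDerivAt (psif B) (qf B v) v :=
  ftc_hasDerivAt isOpen_univ Set.ordConnected_univ ((qf_cont hB).continuousOn)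
    (Set.mem_univ _) (Set.mem_univ _)

end contB

section withB3
variable {B : ℝ × ℝ → ℝ} (hB : ContDiffOn ℝ 3 B Qd)
    (hwave : ∀ x T : ℝ, 0 < x → 0 < T →
      pdt (pdt B) (x, T) = T ^ (-(4 : ℝ) / 3) * x ^ 4 * pdx (pdx B) (x, T))
include hB hwave

/-- The transformed PDE: (u - v) * E_uv = E_v - E_u on Ω. -/
lemma pde {p : ℝ × ℝ} (hp : p ∈ Om) :
    (p.1 - p.2) * E12 B p = E2 B p - E1 B p := by
  have h1 : (0:ℝ) < p.1 + p.2 := Om_sum_pos hp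
  have h2 : (0:ℝ) < p.1 - p.2 := Om_diff_pos hp
  have hPm := Ph_mem hp
  have hBd : DifferentiableAt ℝ B (Ph p) :=
    (hB.contDiffAt (isOpen_Qd.mem_nhds hPm)).differentiableAt (by norm_num)
  have hBx : ContDiffOn ℝ 2 (pdx B) Qd := contDiffOn_pdx isOpen_Qd hB (by norm_num)
  have hBt : ContDiffOn ℝ 2 (pdt B) Qd := contDiffOn_pdt isOpen_Qd hB (by norm_num)
  have hBxd : DifferentiableAt ℝ (pdx B) (Ph p) :=
    (hBx.contDiffAt (isOpen_Qd.mem_nhds hPm)).differentiableAt two_ne_zero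
  have hBtd : DifferentiableAt ℝ (pdt B) (Ph p) :=
    (hBt.contDiffAt (isOpen_Qd.mem_nhds hPm)).differentiableAt two_ne_zero
  -- curves
  have hγ1 : HasDerivAt (fun y : ℝ => 2 / (p.1 + y)) (-2 / (p.1 + p.2) ^ 2) p.2 := by
    have := (hasDerivAt_const p.2 (2:ℝ)).div ((hasDerivAt_id p.2).const_add p.1)
      (ne_of_gt h1)
    exact this.congr_deriv (by simp only [id_eq]; ring)
  have hγ2 : HasDerivAt (fun y : ℝ => ((p.1 - y) / 6) ^ 3)
      (-(((p.1 - p.2) / 6) ^ 2 / 2)) p.2 := by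
    have := (((hasDerivAt_id p.2).const_sub p.1).div_const 6).pow 3
    exact this.congr_deriv (by simp only [id_eq]; push_cast; ring)
  have h0 := hasDerivAt_comp2 (f := B) (γ₁ := fun y : ℝ => 2 / (p.1 + y))
    (γ₂ := fun y : ℝ => ((p.1 - y) / 6) ^ 3) (t := p.2) hBd hγ1 hγ2
  have hc1 := hasDerivAt_comp2 (f := pdx B) (γ₁ := fun y : ℝ => 2 / (p.1 + y))
    (γ₂ := fun y : ℝ => ((p.1 - y) / 6) ^ 3) (t := p.2) hBxd hγ1 hγ2
  have hc2 := hasDerivAt_comp2 (f := pdt B) (γ₁ := fun y : ℝ => 2 / (p.1 + y))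
    (γ₂ := fun y : ℝ => ((p.1 - y) / 6) ^ 3) (t := p.2) hBtd hγ1 hγ2
  have hden : HasDerivAt (fun y : ℝ => p.1 + y) 1 p.2 := by
    simpa using (hasDerivAt_id p.2).const_add p.1
  have hsq : HasDerivAt (fun y : ℝ => (p.1 - y) ^ 2)
      ((2:ℕ) * (p.1 - p.2) ^ 1 * (-1)) p.2 := by
    have := ((hasDerivAt_id p.2).const_sub p.1).pow 2
    exact this.congr_deriv (by simp only [id_eq])
  have htot := ((h0.div_const 2).sub (hc1.div hden (ne_of_gt h1))).add
    (((hden.mul hsq).mul hc2).div_const 144)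
  -- identify E12
  have hEv : (fun t => E1 B (p.1, t)) =ᶠ[nhds p.2] (fun t => e1f B (p.1, t)) := by
    filter_upwards [evOm_t hp] with t ht
    exact pdx_EE_eq hB ht
  have hE12eq : E12 B p = deriv (fun t => e1f B (p.1, t)) p.2 := by
    have : E12 B p = deriv (fun t => E1 B (p.1, t)) p.2 := rfl
    rw [this, hEv.deriv_eq]
  have hderiv : deriv (fun t => e1f B (p.1, t)) p.2 = _ := htot.deriv
  rw [hE12eq, hderiv]
  have hE1e : E1 B p = e1f B p := pdx_EE_eq hB hp
  have hE2e : E2 B p = e2f B p := pdt_EE_eq hB hp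
  rw [hE1e, hE2e]
  have hsym : pdx (pdt B) (Ph p) = pdt (pdx B) (Ph p) :=
    pdx_pdt_symm isOpen_Qd (hB.of_le (by norm_num)) hPm
  have hw : pdt (pdt B) (Ph p)
      = (1 / ((p.1 - p.2) / 6) ^ 4) * (2 / (p.1 + p.2)) ^ 4 * pdx (pdx B) (Ph p) := by
    have hX : (0:ℝ) < 2 / (p.1 + p.2) := div_pos (by norm_num) h1
    have hT : (0:ℝ) < ((p.1 - p.2) / 6) ^ 3 := pow_pos (div_pos h2 (by norm_num)) 3
    have := hwave (2 / (p.1 + p.2)) (((p.1 - p.2) / 6) ^ 3) hX hT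
    rw [rpow_cube_neg43 (div_pos h2 (by norm_num))] at this
    exact this
  simp only [e1f, e2f, Ph]
  simp only [Ph] at hsym hw
  rw [hsym, hw]
  have h6 : ((p.1 - p.2) / 6) ≠ 0 := ne_of_gt (div_pos h2 (by norm_num))
  simp only [Pi.mul_apply, Nat.cast_ofNat]
  field_simp
  ring

omit hwave in
lemma symE {p : ℝ × ℝ} (hp : p ∈ Om) : E21 B p = E12 B p :=
  pdx_pdt_symm isOpen_Om ((hEE hB).of_le (by norm_num)) hp

lemma pde' {p : ℝ × ℝ} (hp : p ∈ Om) :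
    (p.1 - p.2) * E21 B p = E2 B p - E1 B p := by
  rw [symE hB hp]; exact pde hB hwave hp

lemma key1 {p : ℝ × ℝ} (hp : p ∈ Om) :
    HasDerivAt (fun t => E11 B (p.1, t)) (-(E11 B p) / (p.1 - p.2)) p.2 := by
  have hw : (0:ℝ) < p.1 - p.2 := Om_diff_pos hp
  have hd : DifferentiableAt ℝ (E11 B) p := diffAt_of_C1 isOpen_Om (hE11 hB) hp
  have hs := slice_t hd
  have hsym1 : pdt (E11 B) p = pdx (E12 B) p :=
    (pdx_pdt_symm isOpen_Om (hE1 hB) hp).symm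
  have hA : HasDerivAt (fun x : ℝ => x - p.2) 1 p.1 := (hasDerivAt_id p.1).sub_const p.2
  have hB12 : HasDerivAt (fun x => E12 B (x, p.2)) (pdx (E12 B) p) p.1 :=
    slice_x (diffAt_of_C1 isOpen_Om (hE12 hB) hp)
  have hlhs := hA.mul hB12
  have hrhs : HasDerivAt (fun x => E2 B (x, p.2) - E1 B (x, p.2))
      (E21 B p - E11 B p) p.1 :=
    (slice_x (diffAt_of_C1 isOpen_Om ((hE2 hB).of_le one_le_two) hp)).sub
      (slice_x (diffAt_of_C1 isOpen_Om ((hE1 hB).of_le one_le_two) hp))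
  have hfun : (fun x => E2 B (x, p.2) - E1 B (x, p.2))
      =ᶠ[nhds p.1] (fun x => (x - p.2) * E12 B (x, p.2)) := by
    filter_upwards [evOm_x hp] with x hx
    exact (pde hB hwave hx).symm
  have huniq := (hlhs.congr_of_eventuallyEq hfun).unique hrhs
  have hval : pdt (E11 B) p = -(E11 B p) / (p.1 - p.2) := by
    rw [hsym1]
    have hE21 : E21 B p = E12 B p := symE hB hp
    rw [hE21] at huniq
    field_simp
    nlinarith [huniq]
  rwa [hval] at hs

lemma key2 {p : ℝ × ℝ} (hp : p ∈ Om) :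
    HasDerivAt (fun x => E22 B (x, p.2)) ((E22 B p) / (p.1 - p.2)) p.1 := by
  have hw : (0:ℝ) < p.1 - p.2 := Om_diff_pos hp
  have hd : DifferentiableAt ℝ (E22 B) p := diffAt_of_C1 isOpen_Om (hE22 hB) hp
  have hs := slice_x hd
  have hsym2 : pdx (E22 B) p = pdt (E21 B) p :=
    pdx_pdt_symm isOpen_Om (hE2 hB) hp
  have hA : HasDerivAt (fun t : ℝ => p.1 - t) (-1) p.2 := by
    simpa using (hasDerivAt_id p.2).const_sub p.1
  have hB21 : HasDerivAt (fun t => E21 B (p.1, t)) (pdt (E21 B) p) p.2 :=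
    slice_t (diffAt_of_C1 isOpen_Om (hE21 hB) hp)
  have hlhs := hA.mul hB21
  have hrhs : HasDerivAt (fun t => E2 B (p.1, t) - E1 B (p.1, t))
      (E22 B p - E12 B p) p.2 :=
    (slice_t (diffAt_of_C1 isOpen_Om ((hE2 hB).of_le one_le_two) hp)).sub
      (slice_t (diffAt_of_C1 isOpen_Om ((hE1 hB).of_le one_le_two) hp))
  have hfun : (fun t => E2 B (p.1, t) - E1 B (p.1, t))
      =ᶠ[nhds p.2] (fun t => (p.1 - t) * E21 B (p.1, t)) := by
    filter_upwards [evOm_t hp] with t ht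
    exact (pde' hB hwave ht).symm
  have huniq := (hlhs.congr_of_eventuallyEq hfun).unique hrhs
  have hval : pdx (E22 B) p = (E22 B p) / (p.1 - p.2) := by
    rw [hsym2]
    have hE21 : E21 B p = E12 B p := symE hB hp
    rw [hE21] at huniq
    field_simp
    nlinarith [huniq]
  rwa [hval] at hs

lemma Hf_horiz {p : ℝ × ℝ} (hp : p ∈ Om) :
    HasDerivAt (fun x => Hf B (x, p.2)) (2 * E11 B p / (p.1 - p.2)) p.1 := by
  have hw : (0:ℝ) < p.1 - p.2 := Om_diff_pos hp
  have hnum : HasDerivAt (fun x => 2 * (E1 B (x, p.2) - E2 B (x, p.2)))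
      (2 * (E11 B p - E21 B p)) p.1 := by
    have := ((slice_x (diffAt_of_C1 isOpen_Om ((hE1 hB).of_le one_le_two) hp)).sub
      (slice_x (diffAt_of_C1 isOpen_Om ((hE2 hB).of_le one_le_two) hp))).const_mul 2
    exact this
  have hden : HasDerivAt (fun x : ℝ => x - p.2) 1 p.1 := (hasDerivAt_id p.1).sub_const p.2
  have hdiv := hnum.div hden (ne_of_gt hw)
  have hval : (2 * (E11 B p - E21 B p) * (p.1 - p.2) - 2 * (E1 B p - E2 B p) * 1)
      / (p.1 - p.2) ^ 2 = 2 * E11 B p / (p.1 - p.2) := by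
    rw [symE hB hp, show E1 B p - E2 B p = -((p.1 - p.2) * E12 B p) from by
      linarith [pde hB hwave hp]]
    field_simp
    ring
  have : (fun x => Hf B (x, p.2))
      = fun x => 2 * (E1 B (x, p.2) - E2 B (x, p.2)) / (x - p.2) := rfl
  rw [this]
  have h2 := hdiv
  simp only [Prod.mk.eta] at h2
  rwa [hval] at h2

lemma Hf_vert {p : ℝ × ℝ} (hp : p ∈ Om) :
    HasDerivAt (fun t => Hf B (p.1, t)) (-2 * E22 B p / (p.1 - p.2)) p.2 := by
  have hw : (0:ℝ) < p.1 - p.2 := Om_diff_pos hp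
  have hnum : HasDerivAt (fun t => 2 * (E1 B (p.1, t) - E2 B (p.1, t)))
      (2 * (E12 B p - E22 B p)) p.2 := by
    have := ((slice_t (diffAt_of_C1 isOpen_Om ((hE1 hB).of_le one_le_two) hp)).sub
      (slice_t (diffAt_of_C1 isOpen_Om ((hE2 hB).of_le one_le_two) hp))).const_mul 2
    exact this
  have hden : HasDerivAt (fun t : ℝ => p.1 - t) (-1) p.2 := by
    simpa using (hasDerivAt_id p.2).const_sub p.1
  have hdiv := hnum.div hden (ne_of_gt hw)
  have hval : (2 * (E12 B p - E22 B p) * (p.1 - p.2) - 2 * (E1 B p - E2 B p) * (-1))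
      / (p.1 - p.2) ^ 2 = -2 * E22 B p / (p.1 - p.2) := by
    rw [show E1 B p - E2 B p = -((p.1 - p.2) * E12 B p) from by
      linarith [pde hB hwave hp]]
    field_simp
    ring
  have : (fun t => Hf B (p.1, t))
      = fun t => 2 * (E1 B (p.1, t) - E2 B (p.1, t)) / (p.1 - t) := rfl
  rw [this]
  have h2 := hdiv
  simp only [Prod.mk.eta] at h2
  rwa [hval] at h2

lemma qf_eq {p : ℝ × ℝ} (hp : p ∈ Om) :
    -2 * E22 B p / (p.1 - p.2) = qf B p.2 := by
  have habs : |p.2| < p.1 := hp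
  have habs0 : |p.2| < u0 p.2 := u0_gt_abs p.2
  have hkey : ∀ t ∈ Set.uIcc p.1 (u0 p.2),
      HasDerivAt (fun x => -2 * E22 B (x, p.2) / (x - p.2)) 0 t := by
    intro t ht
    rw [Set.mem_uIcc] at ht
    have htm : |p.2| < t := by
      rcases ht with ⟨h1, _⟩ | ⟨h1, _⟩ <;> linarith
    have htOm : ((t, p.2) : ℝ × ℝ) ∈ Om := htm
    have hwt : (0:ℝ) < t - p.2 := Om_diff_pos htOm
    have hnum : HasDerivAt (fun x => -2 * E22 B (x, p.2))
        (-2 * (E22 B (t, p.2) / (t - p.2))) t := by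
      have := (key2 hB hwave htOm).const_mul (-2)
      simpa using this
    have hden : HasDerivAt (fun x : ℝ => x - p.2) 1 t := (hasDerivAt_id t).sub_const p.2
    have hdiv := hnum.div hden (ne_of_gt hwt)
    refine hdiv.congr_deriv ?_
    symm
    field_simp
    ring
  have := const_of_deriv_zero hkey
  have hq : qf B p.2 = -2 * E22 B (u0 p.2, p.2) / (u0 p.2 - p.2) := rfl
  rw [hq, ← this]

lemma Hf_eq {p : ℝ × ℝ} (hp : p ∈ Om) :
    Hf B p = phif B p.1 + psif B p.2 + Hf B ((1:ℝ), (0:ℝ)) := by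
  have habs : |p.2| < p.1 := hp
  have hp1 : (0:ℝ) < p.1 := Om_fst_pos hp
  -- vertical step
  have hstepV : Hf B (p.1, 0) - psif B 0 = Hf B p - psif B p.2 := by
    have hkey : ∀ t ∈ Set.uIcc p.2 (0:ℝ),
        HasDerivAt (fun t => Hf B (p.1, t) - psif B t) 0 t := by
      intro t ht
      have htm : |t| ≤ |p.2| := by
        rw [Set.mem_uIcc] at ht
        rcases ht with ⟨h1, h2⟩ | ⟨h1, h2⟩ <;> rw [abs_le] <;>
          constructor <;> nlinarith [le_abs_self p.2, neg_abs_le p.2]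
      have htOm : ((p.1, t) : ℝ × ℝ) ∈ Om := lt_of_le_of_lt htm habs
      have h1 := Hf_vert hB hwave htOm
      have h2 := hpsi hB t
      have h3 := h1.sub h2
      have h4 : -2 * E22 B (p.1, t) / (p.1 - t) - qf B t = 0 := by
        rw [qf_eq hB hwave htOm]; ring
      rwa [h4] at h3
    have := const_of_deriv_zero (a := p.2) (b := (0:ℝ)) hkey
    exact this
  -- horizontal step
  have hstepH : Hf B (p.1, 0) - phif B p.1 = Hf B ((1:ℝ), (0:ℝ)) - phif B 1 := by
    have hkey : ∀ t ∈ Set.uIcc (1:ℝ) p.1,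
        HasDerivAt (fun x => Hf B (x, (0:ℝ)) - phif B x) 0 t := by
      intro t ht
      rw [Set.mem_uIcc] at ht
      have ht0 : (0:ℝ) < t := by rcases ht with ⟨h1, _⟩ | ⟨h1, _⟩ <;> linarith
      have htOm : ((t, (0:ℝ)) : ℝ × ℝ) ∈ Om := by
        show |(0:ℝ)| < t; simpa using ht0
      have h1 := Hf_horiz hB hwave htOm
      have h2 := hphi hB ht0
      have h3 := h1.sub h2
      have h4 : 2 * E11 B (t, (0:ℝ)) / (t - 0) - pf B t = 0 := by
        show 2 * E11 B (t, (0:ℝ)) / (t - 0) - 2 * E11 B (t, 0) / t = 0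
        rw [sub_zero]; ring
      rwa [h4] at h3
    have := const_of_deriv_zero (a := (1:ℝ)) (b := p.1) hkey
    linarith [this]
  have hpsi0 : psif B 0 = 0 := intervalIntegral.integral_same
  have hphi1 : phif B 1 = 0 := intervalIntegral.integral_same
  have hpeta : Hf B (p.1, p.2) = Hf B p := by rw [Prod.mk.eta]
  have hpsieta : psif B p.2 = psif B p.2 := rfl
  nlinarith [hstepV, hstepH, hpsi0, hphi1]

end withB3

noncomputable def c0 (B : ℝ × ℝ → ℝ) : ℝ := Hf B ((1:ℝ), (0:ℝ))
noncomputable def F2f (B : ℝ × ℝ → ℝ) : ℝ → ℝ := fun u => -(phif B u) - c0 B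
noncomputable def F1f (B : ℝ × ℝ → ℝ) : ℝ → ℝ := fun u => ∫ t in (1:ℝ)..u, F2f B t
noncomputable def F0f (B : ℝ × ℝ → ℝ) : ℝ → ℝ := fun u => ∫ t in (1:ℝ)..u, F1f B t
noncomputable def G2f (B : ℝ × ℝ → ℝ) : ℝ → ℝ := fun v => -(psif B v)
noncomputable def G1f (B : ℝ × ℝ → ℝ) : ℝ → ℝ := fun v => ∫ t in (0:ℝ)..v, G2f B t
noncomputable def G0f (B : ℝ × ℝ → ℝ) : ℝ → ℝ := fun v => ∫ t in (0:ℝ)..v, G1f B t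

section FG
variable {B : ℝ × ℝ → ℝ} (hB : ContDiffOn ℝ 3 B Qd)
include hB

lemma hF2' {u : ℝ} (hu : 0 < u) : HasDerivAt (F2f B) (-(pf B u)) u := by
  have := (hphi hB hu).neg.sub_const (c0 B)
  exact this

lemma hF2c : ContinuousOn (F2f B) (Set.Ioi 0) := fun u hu =>
  ((hF2' hB hu).continuousAt).continuousWithinAt

lemma hF1' {u : ℝ} (hu : 0 < u) : HasDerivAt (F1f B) (F2f B u) u :=
  ftc_hasDerivAt isOpen_Ioi Set.ordConnected_Ioi (hF2c hB) (by norm_num) hu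

lemma hF1c : ContinuousOn (F1f B) (Set.Ioi 0) := fun u hu =>
  ((hF1' hB hu).continuousAt).continuousWithinAt

lemma hF0' {u : ℝ} (hu : 0 < u) : HasDerivAt (F0f B) (F1f B u) u :=
  ftc_hasDerivAt isOpen_Ioi Set.ordConnected_Ioi (hF1c hB) (by norm_num) hu

lemma hG2' (v : ℝ) : HasDerivAt (G2f B) (-(qf B v)) v := (hpsi hB v).neg

lemma hG2c : Continuous (G2f B) := by
  rw [continuous_iff_continuousAt]; exact fun v => (hG2' hB v).continuousAt

lemma hG1' (v : ℝ) : HasDerivAt (G1f B) (G2f B v) v :=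
  ftc_hasDerivAt isOpen_univ Set.ordConnected_univ ((hG2c hB).continuousOn)
    (Set.mem_univ _) (Set.mem_univ _)

lemma hG1c : Continuous (G1f B) := by
  rw [continuous_iff_continuousAt]; exact fun v => (hG1' hB v).continuousAt

lemma hG0' (v : ℝ) : HasDerivAt (G0f B) (G1f B v) v :=
  ftc_hasDerivAt isOpen_univ Set.ordConnected_univ ((hG1c hB).continuousOn)
    (Set.mem_univ _) (Set.mem_univ _)

lemma hGcd : ContDiff ℝ 3 (G0f B) := by
  have h3 : (3 : WithTop ℕ∞) = 2 + 1 := by norm_num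
  rw [h3]
  refine contDiff_succ_iff_deriv.2 ⟨fun v => (hG0' hB v).differentiableAt, by simp, ?_⟩
  have hd : deriv (G0f B) = G1f B := funext fun v => (hG0' hB v).deriv
  rw [hd]
  have h2 : (2 : WithTop ℕ∞) = 1 + 1 := by norm_num
  rw [h2]
  refine contDiff_succ_iff_deriv.2 ⟨fun v => (hG1' hB v).differentiableAt, by simp, ?_⟩
  have hd1 : deriv (G1f B) = G2f B := funext fun v => (hG1' hB v).deriv
  rw [hd1]
  refine contDiff_one_iff_deriv.2 ⟨fun v => (hG2' hB v).differentiableAt, ?_⟩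
  have hd2 : deriv (G2f B) = fun v => -(qf B v) := funext fun v => (hG2' hB v).deriv
  rw [hd2]
  exact (qf_cont hB).neg

lemma hFcd : ContDiffOn ℝ 3 (F0f B) (Set.Ioi 0) := by
  have h3 : (3 : WithTop ℕ∞) = 2 + 1 := by norm_num
  rw [h3]
  refine (contDiffOn_succ_iff_deriv_of_isOpen isOpen_Ioi).2
    ⟨fun u hu => (hF0' hB hu).differentiableAt.differentiableWithinAt, by simp, ?_⟩
  have h2 : (2 : WithTop ℕ∞) = 1 + 1 := by norm_num
  have hstep2 : ContDiffOn ℝ 2 (F1f B) (Set.Ioi 0) := by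
    rw [h2]
    refine (contDiffOn_succ_iff_deriv_of_isOpen isOpen_Ioi).2
      ⟨fun u hu => (hF1' hB hu).differentiableAt.differentiableWithinAt, by simp, ?_⟩
    have hstep1 : ContDiffOn ℝ 1 (F2f B) (Set.Ioi 0) := by
      have h1 : (1 : WithTop ℕ∞) = 0 + 1 := by norm_num
      rw [h1]
      refine (contDiffOn_succ_iff_deriv_of_isOpen isOpen_Ioi).2
        ⟨fun u hu => (hF2' hB hu).differentiableAt.differentiableWithinAt, by simp, ?_⟩
      have : ContDiffOn ℝ 0 (fun u => -(pf B u)) (Set.Ioi 0) := by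
        rw [contDiffOn_zero]
        exact (pf_contOn hB).neg
      exact this.congr fun u hu => (hF2' hB hu).deriv
    exact hstep1.congr fun u hu => (hF1' hB hu).deriv
  exact hstep2.congr fun u hu => (hF0' hB hu).deriv

end FG

noncomputable def Ruf (B : ℝ × ℝ → ℝ) : ℝ × ℝ → ℝ := fun p =>
  E1 B p - (F1f B p.1 + (G1f B p.2 - F1f B p.1) / 2 - ((p.1 - p.2) / 2) * F2f B p.1)

noncomputable def Rf (B : ℝ × ℝ → ℝ) : ℝ × ℝ → ℝ := fun p =>
  EE B p - (F0f B p.1 + G0f B p.2 + ((p.1 - p.2) / 2) * (G1f B p.2 - F1f B p.1))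

section withB4
variable {B : ℝ × ℝ → ℝ} (hB : ContDiffOn ℝ 3 B Qd)
    (hwave : ∀ x T : ℝ, 0 < x → 0 < T →
      pdt (pdt B) (x, T) = T ^ (-(4 : ℝ) / 3) * x ^ 4 * pdx (pdx B) (x, T))
include hB hwave

lemma hHsum {p : ℝ × ℝ} (hp : p ∈ Om) :
    (p.1 - p.2) * (phif B p.1 + psif B p.2 + c0 B) = 2 * (E1 B p - E2 B p) := by
  have h2 : Hf B p = phif B p.1 + psif B p.2 + c0 B := Hf_eq hB hwave hp
  have h1 : (p.1 - p.2) * Hf B p = 2 * (E1 B p - E2 B p) := by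
    have hw : p.1 - p.2 ≠ 0 := ne_of_gt (Om_diff_pos hp)
    show (p.1 - p.2) * (2 * (E1 B p - E2 B p) / (p.1 - p.2)) = _
    field_simp
  rw [h2] at h1
  exact h1

lemma Ru_eq_Rv {p : ℝ × ℝ} (hp : p ∈ Om) :
    Ruf B p = E2 B p - (G1f B p.2 - (G1f B p.2 - F1f B p.1) / 2
      + ((p.1 - p.2) / 2) * G2f B p.2) := by
  have h4 := hHsum hB hwave hp
  simp only [Ruf, F2f, G2f]
  linear_combination - h4 / 2

lemma Ru_vert {p : ℝ × ℝ} (hp : p ∈ Om) :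
    HasDerivAt (fun t => Ruf B (p.1, t)) 0 p.2 := by
  have hw : (0:ℝ) < p.1 - p.2 := Om_diff_pos hp
  have hE1s : HasDerivAt (fun t => E1 B (p.1, t)) (E12 B p) p.2 :=
    slice_t (diffAt_of_C1 isOpen_Om ((hE1 hB).of_le one_le_two) hp)
  have hG1s := ((hG1' hB p.2).sub_const (F1f B p.1)).div_const 2
  have hwterm : HasDerivAt (fun t : ℝ => ((p.1 - t) / 2) * F2f B p.1)
      ((-1 / 2) * F2f B p.1) p.2 := by
    have := (((hasDerivAt_id p.2).const_sub p.1).div_const 2).mul_const (F2f B p.1)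
    exact this.congr_deriv (by ring)
  have htot := hE1s.sub (((hasDerivAt_const p.2 (F1f B p.1)).add hG1s).sub hwterm)
  have hval : E12 B p - (0 + G2f B p.2 / 2 - -1 / 2 * F2f B p.1) = 0 := by
    have h4 := hHsum hB hwave hp
    have hpde := pde hB hwave hp
    have hV : (p.1 - p.2) * (E12 B p - (0 + G2f B p.2 / 2 - -1 / 2 * F2f B p.1))
        = (p.1 - p.2) * 0 := by
      simp only [G2f, F2f]
      linear_combination hpde + h4 / 2
    exact mul_left_cancel₀ (ne_of_gt hw) hV
  rwa [hval] at htot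

omit hwave in
lemma Ru_horiz0 {u : ℝ} (hu : 0 < u) :
    HasDerivAt (fun x => Ruf B (x, (0:ℝ))) 0 u := by
  have hq : ((u, (0:ℝ)) : ℝ × ℝ) ∈ Om := by show |(0:ℝ)| < u; simpa using hu
  have hE1s : HasDerivAt (fun x => E1 B (x, (0:ℝ))) (E11 B (u, 0)) u :=
    slice_x (p := (u, (0:ℝ))) (diffAt_of_C1 isOpen_Om ((hE1 hB).of_le one_le_two) hq)
  have hF1s := hF1' hB hu
  have hmid := ((hasDerivAt_const u (G1f B 0)).sub (hF1' hB hu)).div_const 2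
  have hwterm := (((hasDerivAt_id u).sub_const (0:ℝ)).div_const 2).mul (hF2' hB hu)
  have htot := hE1s.sub ((hF1s.add hmid).sub hwterm)
  have hval : E11 B (u, 0) - (F2f B u + (0 - F2f B u) / 2
      - (1 / 2 * F2f B u + (u - 0) / 2 * -(pf B u))) = 0 := by
    have hpf : pf B u = 2 * E11 B (u, 0) / u := rfl
    rw [hpf]
    field_simp
    ring
  simp only [id_eq] at htot
  rwa [hval] at htot

lemma Ru_const {p : ℝ × ℝ} (hp : p ∈ Om) : Ruf B p = Ruf B ((1:ℝ), (0:ℝ)) := by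
  have habs : |p.2| < p.1 := hp
  have hp1 : (0:ℝ) < p.1 := Om_fst_pos hp
  have hstep1 : Ruf B (p.1, 0) = Ruf B (p.1, p.2) := by
    apply const_of_deriv_zero (f := fun t => Ruf B (p.1, t)) (a := p.2) (b := (0:ℝ))
    intro t ht
    have htm : |t| ≤ |p.2| := by
      rw [Set.mem_uIcc] at ht
      rcases ht with ⟨h1, h2⟩ | ⟨h1, h2⟩ <;> rw [abs_le] <;> constructor <;>
        nlinarith [le_abs_self p.2, neg_abs_le p.2]
    exact Ru_vert hB hwave (show ((p.1, t) : ℝ × ℝ) ∈ Om from lt_of_le_of_lt htm habs)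
  have hstep2 : Ruf B (p.1, 0) = Ruf B ((1:ℝ), (0:ℝ)) := by
    have := const_of_deriv_zero (f := fun x => Ruf B (x, (0:ℝ))) (a := (1:ℝ)) (b := p.1)
      (fun t ht => by
        rw [Set.mem_uIcc] at ht
        have ht0 : (0:ℝ) < t := by rcases ht with ⟨h1, _⟩ | ⟨h1, _⟩ <;> linarith
        exact Ru_horiz0 hB ht0)
    exact this
  rw [← Prod.mk.eta (p := p), ← hstep1, hstep2]

lemma R_affine {p : ℝ × ℝ} (hp : p ∈ Om) :
    Rf B p = Rf B ((1:ℝ), (0:ℝ)) + Ruf B ((1:ℝ), (0:ℝ)) * (p.1 + p.2 - 1) := by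
  have habs : |p.2| < p.1 := hp
  have hp1 : (0:ℝ) < p.1 := Om_fst_pos hp
  set a := Ruf B ((1:ℝ), (0:ℝ)) with ha
  -- vertical segment
  have hvert : Rf B (p.1, p.2) = Rf B (p.1, 0) + a * (p.2 - 0) := by
    apply affine_of_deriv_const (f := fun t => Rf B (p.1, t)) (a := (0:ℝ)) (b := p.2)
    intro t ht
    have htm : |t| ≤ |p.2| := by
      rw [Set.mem_uIcc] at ht
      rcases ht with ⟨h1, h2⟩ | ⟨h1, h2⟩ <;> rw [abs_le] <;> constructor <;>
        nlinarith [le_abs_self p.2, neg_abs_le p.2]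
    have htOm : ((p.1, t) : ℝ × ℝ) ∈ Om := lt_of_le_of_lt htm habs
    have hE2s : HasDerivAt (fun s => EE B (p.1, s)) (E2 B (p.1, t)) t :=
      slice_t (p := (p.1, t)) (diffAt_of_C1 isOpen_Om ((hEE hB).of_le (by norm_num)) htOm)
    have hG0s := hG0' hB t
    have hprod := (((hasDerivAt_id t).const_sub p.1).div_const 2).mul
      ((hG1' hB t).sub_const (F1f B p.1))
    have htot := hE2s.sub (((hasDerivAt_const t (F0f B p.1)).add hG0s).add hprod)
    have hval : E2 B (p.1, t) - (0 + G1f B t + (-1 / 2 * (G1f B t - F1f B p.1)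
        + (p.1 - t) / 2 * G2f B t)) = a := by
      rw [ha, ← Ru_const hB hwave htOm, Ru_eq_Rv hB hwave htOm]
      ring
    have htot2 := htot
    simp only [id_eq] at htot2
    exact htot2.congr_deriv hval
  -- horizontal segment
  have hhoriz : Rf B (p.1, 0) = Rf B (1, 0) + a * (p.1 - 1) := by
    apply affine_of_deriv_const (f := fun x => Rf B (x, (0:ℝ))) (a := (1:ℝ)) (b := p.1)
    intro t ht
    rw [Set.mem_uIcc] at ht
    have ht0 : (0:ℝ) < t := by rcases ht with ⟨h1, _⟩ | ⟨h1, _⟩ <;> linarith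
    have htOm : ((t, (0:ℝ)) : ℝ × ℝ) ∈ Om := by show |(0:ℝ)| < t; simpa using ht0
    have hE1s : HasDerivAt (fun x => EE B (x, (0:ℝ))) (E1 B (t, 0)) t :=
      slice_x (p := (t, (0:ℝ))) (diffAt_of_C1 isOpen_Om ((hEE hB).of_le (by norm_num)) htOm)
    have hF0s := hF0' hB ht0
    have hprod := (((hasDerivAt_id t).sub_const (0:ℝ)).div_const 2).mul
      ((hasDerivAt_const t (G1f B 0)).sub (hF1' hB ht0))
    have htot := hE1s.sub ((hF0s.add (hasDerivAt_const t (G0f B 0))).add hprod)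
    have hval : E1 B (t, 0) - (F1f B t + 0 + (1 / 2 * (G1f B 0 - F1f B t)
        + (t - 0) / 2 * (0 - F2f B t))) = a := by
      rw [ha, ← Ru_const hB hwave htOm]
      simp only [Ruf]
      ring
    have htot2 := htot
    simp only [id_eq] at htot2
    exact htot2.congr_deriv hval
  calc Rf B p = Rf B (p.1, p.2) := by rw [Prod.mk.eta]
    _ = Rf B (p.1, 0) + a * (p.2 - 0) := hvert
    _ = (Rf B (1, 0) + a * (p.1 - 1)) + a * (p.2 - 0) := by rw [hhoriz]
    _ = Rf B ((1:ℝ), (0:ℝ)) + a * (p.1 + p.2 - 1) := by ring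

end withB4

end S19


theorem stmt_19 (B : ℝ × ℝ → ℝ)
    (hB : ContDiffOn ℝ 3 B {p : ℝ × ℝ | 0 < p.1 ∧ 0 < p.2})
    (hwave : ∀ x T : ℝ, 0 < x → 0 < T →
      pdt (pdt B) (x, T)
        = T ^ (-(4 : ℝ) / 3) * x ^ 4 * pdx (pdx B) (x, T)) :
    ∃ F G : ℝ → ℝ, ContDiffOn ℝ 3 F (Set.Ioi 0) ∧ ContDiff ℝ 3 G ∧
      ∀ x T : ℝ, 0 < x → 0 < T →
        B (x, T) = x *
          (F (1 / x + 3 * T ^ ((1 : ℝ) / 3)) + G (1 / x - 3 * T ^ ((1 : ℝ) / 3))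
            + 3 * T ^ ((1 : ℝ) / 3) *
              (deriv G (1 / x - 3 * T ^ ((1 : ℝ) / 3))
                - deriv F (1 / x + 3 * T ^ ((1 : ℝ) / 3)))) := by
  have hB' : ContDiffOn ℝ 3 B S19.Qd := hB
  set a := S19.Ruf B ((1:ℝ), (0:ℝ)) with ha
  set b := S19.Rf B ((1:ℝ), (0:ℝ)) with hb
  refine ⟨fun u => S19.F0f B u + a * u + (b - a), fun v => S19.G0f B v + a * v, ?_, ?_, ?_⟩
  · exact ((S19.hFcd hB').add ((contDiff_const.mul contDiff_id).contDiffOn)).add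
      contDiffOn_const
  · exact (S19.hGcd hB').add (contDiff_const.mul contDiff_id)
  · intro x T hx hT
    have hs0 : (0:ℝ) < T ^ ((1:ℝ)/3) := Real.rpow_pos_of_pos hT _
    have hix : (0:ℝ) < 1 / x := by positivity
    set s : ℝ := T ^ ((1:ℝ)/3) with hsdef
    have hOm : ((1/x + 3*s, 1/x - 3*s) : ℝ × ℝ) ∈ S19.Om := by
      show |1/x - 3*s| < 1/x + 3*s
      rw [abs_lt]; constructor <;> nlinarith
    have hu0 : (0:ℝ) < 1/x + 3*s := S19.Om_fst_pos hOm
    have hcube : ((1/x + 3*s - (1/x - 3*s))/6)^3 = T := by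
      have h1 : (1/x + 3*s - (1/x - 3*s))/6 = s := by ring
      rw [h1, hsdef, ← Real.rpow_natCast (T ^ ((1:ℝ)/3)) 3, ← Real.rpow_mul hT.le]
      norm_num
    have hsum : 1/x + 3*s + (1/x - 3*s) = 2/x := by ring
    have hBxT : B (x, T) = x * S19.EE B (1/x + 3*s, 1/x - 3*s) := by
      have : S19.EE B (1/x + 3*s, 1/x - 3*s)
          = ((1/x + 3*s + (1/x - 3*s))/2) * B (2/(1/x + 3*s + (1/x - 3*s)),
              ((1/x + 3*s - (1/x - 3*s))/6)^3) := rfl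
      rw [this, hcube, hsum, show (2:ℝ)/(2/x) = x from by field_simp,
        show ((2:ℝ)/x)/2 = 1/x from by ring]
      field_simp
    have hR := S19.R_affine hB' hwave hOm
    have hR' : S19.EE B (1/x + 3*s, 1/x - 3*s)
        = S19.F0f B (1/x + 3*s) + S19.G0f B (1/x - 3*s)
          + ((1/x + 3*s - (1/x - 3*s))/2) * (S19.G1f B (1/x - 3*s) - S19.F1f B (1/x + 3*s))
          + (b + a * (1/x + 3*s + (1/x - 3*s) - 1)) := by
      simp only [S19.Rf, ← ha, ← hb] at hR
      have hbe : S19.EE B ((1:ℝ), (0:ℝ)) - (S19.F0f B 1 + S19.G0f B 0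
          + ((1:ℝ) - 0) / 2 * (S19.G1f B 0 - S19.F1f B 1)) = b := rfl
      rw [hbe] at hR
      linarith [hR]
    have hderivF : deriv (fun u => S19.F0f B u + a * u + (b - a)) (1/x + 3*s)
        = S19.F1f B (1/x + 3*s) + a := by
      have h1 := ((S19.hF0' hB' hu0).add ((hasDerivAt_id _).const_mul a)).add_const (b - a)
      have := h1.deriv
      simpa using this
    have hderivG : deriv (fun v => S19.G0f B v + a * v) (1/x - 3*s)
        = S19.G1f B (1/x - 3*s) + a := by
      have h1 := (S19.hG0' hB' (1/x - 3*s)).add ((hasDerivAt_id _).const_mul a)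
      have := h1.deriv
      exact this.trans (by ring)
    rw [hderivF, hderivG, hBxT, hR']
    ring
end
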